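/- arXiv:1307.0158 — 4 statements merged into one kernel-verified Lean document; each statement's English description precedes it below -/
import Mathlib

section
/- The sets A = {n ∈ ℕ : ∃ k m, n + 2 = 4^k * (8m + 1)} and B = {n ∈ ℕ : ∃ k, 3n + 10 = 4^k} satisfy: B is infinite and A ∩ B = {2}. -/
private def gseq : ℕ → ℕ
  | 0 => 2
  | (k + 1) => 4 * gseq k + 10

private lemma gseq_spec (k : ℕ) : 3 * gseq k + 10 = 4 ^ (k + 2) := by
  induction k with
  | zero => simp [gseq]
  | succ k ih =>
    have h4 : 4 ^ (k + 1 + 2) = 4 ^ (k + 2) * 4 := by rw [pow_succ]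
    simp only [gseq]
    omega

private lemma gseq_mono : StrictMono gseq := by
  apply strictMono_nat_of_lt_succ
  intro k
  simp only [gseq]
  omega

theorem stmt_1 :
    {n : ℕ | ∃ k : ℕ, 3 * n + 10 = 4 ^ k}.Infinite ∧
    {n : ℕ | ∃ k m : ℕ, n + 2 = 4 ^ k * (8 * m + 1)} ∩
      {n : ℕ | ∃ k : ℕ, 3 * n + 10 = 4 ^ k} = {2} := by
  constructor
  · exact Set.infinite_of_injective_forall_mem gseq_mono.injective
      (fun k => ⟨k + 2, gseq_spec k⟩)
  · ext n
    simp only [Set.mem_inter_iff, Set.mem_setOf_eq, Set.mem_singleton_iff]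
    constructor
    · rintro ⟨⟨k, m, h1⟩, j, h2⟩
      have hj2 : 2 ≤ j := by
        by_contra h
        push_neg at h
        interval_cases j <;> norm_num at h2 <;> omega
      obtain ⟨i, rfl⟩ : ∃ i, j = i + 2 := ⟨j - 2, by omega⟩
      have h16 : 4 ^ (i + 2) = 16 * 4 ^ i := by rw [pow_add]; ring
      rw [h16] at h2
      match k with
      | 0 =>
        simp only [pow_zero, one_mul] at h1
        have ht : 1 ≤ 4 ^ i := Nat.one_le_pow _ _ (by norm_num)
        omega
      | 1 =>
        simp only [pow_one] at h1
        -- 3n + 10 = 96m + 16, so 6m + 1 = 4^i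
        have hti : 6 * m + 1 = 4 ^ i := by omega
        match i with
        | 0 =>
          simp at hti
          omega
        | i' + 1 =>
          have : 4 ^ (i' + 1) = 4 * 4 ^ i' := by rw [pow_succ]; ring
          omega
      | k' + 2 =>
        have hk : 4 ^ (k' + 2) = 16 * 4 ^ k' := by rw [pow_add]; ring
        rw [hk] at h1
        have hv : 1 ≤ 4 ^ k' * (8 * m + 1) :=
          Nat.one_le_iff_ne_zero.mpr (by positivity)
        set v := 4 ^ k' * (8 * m + 1) with hvdef
        have h1' : n + 2 = 16 * v := by rw [h1]; ring
        -- 3n + 10 = 48v + 4 = 16 * 4^i → 12v + 1 = 4 * 4^i, contradiction mod 4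
        omega
    · rintro rfl
      exact ⟨⟨1, 0, by norm_num⟩, 2, by norm_num⟩
end

section
/- For any integer N ≡ 5 (mod 8), the number of representations N = x² + y² + 2z² + 8w² with (x,y,z,w) ∈ ℤ⁴ equals the number of representations N = x² + 4y² + 8z² + 8w² with (x,y,z,w) ∈ ℤ⁴, up to the factor 2 coming from switching x and y in the first form: #{(x,y,z,w) ∈ ℤ⁴ : N = x² + y² + 2z² + 8w²} = 2 · #{(x,y,z,w) ∈ ℤ⁴ : N = x² + 4y² + 8z² + 8w²}. -/
private lemma sq8 (x : ℤ) :
    (x % 2 = 1 ∧ x^2 % 8 = 1) ∨ (x % 2 = 0 ∧ (x^2 % 8 = 0 ∨ x^2 % 8 = 4)) := by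
  have h : x % 4 = 0 ∨ x % 4 = 1 ∨ x % 4 = 2 ∨ x % 4 = 3 := by omega
  rcases h with h | h | h | h
  · obtain ⟨q, rfl⟩ : ∃ q, x = 4*q := ⟨x/4, by omega⟩
    have : (4*q)^2 = 8*(2*q^2) := by ring
    omega
  · obtain ⟨q, rfl⟩ : ∃ q, x = 4*q+1 := ⟨x/4, by omega⟩
    have : (4*q+1)^2 = 8*(2*q^2+q) + 1 := by ring
    omega
  · obtain ⟨q, rfl⟩ : ∃ q, x = 4*q+2 := ⟨x/4, by omega⟩
    have : (4*q+2)^2 = 8*(2*q^2+2*q) + 4 := by ring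
    omega
  · obtain ⟨q, rfl⟩ : ∃ q, x = 4*q+3 := ⟨x/4, by omega⟩
    have : (4*q+3)^2 = 8*(2*q^2+3*q+1) + 1 := by ring
    omega

private def gmap : Bool × (ℤ × ℤ × ℤ × ℤ) → ℤ × ℤ × ℤ × ℤ
  | (true, (a,b,c,d)) => (a, 2*b, 2*c, d)
  | (false, (a,b,c,d)) => (2*b, a, 2*c, d)

theorem stmt_3 (N : ℤ) (hN : N % 8 = 5) :
    {p : ℤ × ℤ × ℤ × ℤ | N = p.1^2 + p.2.1^2 + 2*p.2.2.1^2 + 8*p.2.2.2^2}.ncard =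
      2 * {p : ℤ × ℤ × ℤ × ℤ | N = p.1^2 + 4*p.2.1^2 + 8*p.2.2.1^2 + 8*p.2.2.2^2}.ncard := by
  classical
  have keyB : ∀ a b c d : ℤ, N = a^2+4*b^2+8*c^2+8*d^2 → a % 2 = 1 := by
    intro a b c d h
    rcases sq8 a with ⟨h1, _⟩ | ⟨h1, h2⟩
    · exact h1
    · exfalso
      rcases sq8 b with ⟨_, hb⟩ | ⟨_, hb⟩ <;> omega
  have key : ∀ x y z w : ℤ, N = x^2+y^2+2*z^2+8*w^2 →
      z % 2 = 0 ∧ (x % 2 = 1 ∧ y % 2 = 0 ∨ x % 2 = 0 ∧ y % 2 = 1) := by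
    intro x y z w h
    rcases sq8 x with ⟨hx1, hx2⟩ | ⟨hx1, hx2⟩ <;>
      rcases sq8 y with ⟨hy1, hy2⟩ | ⟨hy1, hy2⟩ <;>
        rcases sq8 z with ⟨hz1, hz2⟩ | ⟨hz1, hz2⟩ <;> omega
  set A : Set (ℤ × ℤ × ℤ × ℤ) :=
    {p | N = p.1^2 + p.2.1^2 + 2*p.2.2.1^2 + 8*p.2.2.2^2} with hA
  set B : Set (ℤ × ℤ × ℤ × ℤ) :=
    {p | N = p.1^2 + 4*p.2.1^2 + 8*p.2.2.1^2 + 8*p.2.2.2^2} with hB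
  have hmem : ∀ q : Bool × B, gmap (q.1, (q.2 : ℤ × ℤ × ℤ × ℤ)) ∈ A := by
    rintro ⟨t, ⟨⟨a,b,c,d⟩, hb⟩⟩
    simp only [hB, Set.mem_setOf_eq] at hb
    cases t <;> simp only [gmap, hA, Set.mem_setOf_eq] <;> linear_combination hb
  let f : Bool × B → A := fun q => ⟨gmap (q.1, (q.2 : ℤ × ℤ × ℤ × ℤ)), hmem q⟩
  have hbij : Function.Bijective f := by
    constructor
    · rintro ⟨t1, ⟨⟨a1,b1,c1,d1⟩, h1⟩⟩ ⟨t2, ⟨⟨a2,b2,c2,d2⟩, h2⟩⟩ heq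
      simp only [hB, Set.mem_setOf_eq] at h1 h2
      have ho1 := keyB a1 b1 c1 d1 h1
      have ho2 := keyB a2 b2 c2 d2 h2
      have hv : gmap (t1, (a1,b1,c1,d1)) = gmap (t2, (a2,b2,c2,d2)) :=
        congrArg Subtype.val heq
      cases t1 <;> cases t2 <;>
        simp only [gmap, Prod.mk.injEq] at hv <;>
        simp only [Prod.mk.injEq, Subtype.mk.injEq, Bool.true_eq_false,
          Bool.false_eq_true, true_and] <;> omega
    · rintro ⟨⟨x,y,z,w⟩, hp⟩
      simp only [hA, Set.mem_setOf_eq] at hp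
      obtain ⟨hz, hxy⟩ := key x y z w hp
      obtain ⟨c, rfl⟩ : ∃ c, z = 2*c := ⟨z/2, by omega⟩
      rcases hxy with ⟨hx, hy⟩ | ⟨hx, hy⟩
      · obtain ⟨b, rfl⟩ : ∃ b, y = 2*b := ⟨y/2, by omega⟩
        refine ⟨(true, ⟨(x, b, c, w), ?_⟩), ?_⟩
        · simp only [hB, Set.mem_setOf_eq]
          linear_combination hp
        · apply Subtype.ext
          simp [f, gmap]
      · obtain ⟨b, rfl⟩ : ∃ b, x = 2*b := ⟨x/2, by omega⟩
        refine ⟨(false, ⟨(y, b, c, w), ?_⟩), ?_⟩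
        · simp only [hB, Set.mem_setOf_eq]
          linear_combination hp
        · apply Subtype.ext
          simp [f, gmap]
  rw [← Nat.card_coe_set_eq, ← Nat.card_coe_set_eq,
    ← Nat.card_eq_of_bijective f hbij, Nat.card_prod]
  simp [Nat.card_eq_fintype_card]
end

section
/- For all integers c and odd integers t ≥ 3: gcd(c,2)² + gcd(c,2t)²·(t−5)/(4t) + gcd(c,t)²/t + gcd(c,4t)²/(4t) − 1 − gcd(c,4)²/4 ≥ 0. -/
lemma mygcd {m n : ℕ} (h : Nat.Coprime m n) (c : ℕ) :
    Nat.gcd c (m * n) = Nat.gcd c m * Nat.gcd c n := by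
  apply Nat.dvd_antisymm
  · have h1 : Nat.gcd c (m*n) ∣ Nat.gcd (Nat.gcd c (m*n)) m * Nat.gcd (Nat.gcd c (m*n)) n :=
      Nat.dvd_gcd_mul_gcd_iff_dvd_mul.mpr (Nat.gcd_dvd_right _ _)
    refine h1.trans (Nat.mul_dvd_mul ?_ ?_) <;>
      exact Nat.dvd_gcd ((Nat.gcd_dvd_left _ _).trans (Nat.gcd_dvd_left _ _)) (Nat.gcd_dvd_right _ _)
  · refine (Nat.Coprime.gcd_both c c h).mul_dvd_of_dvd_of_dvd ?_ ?_ <;>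
      exact Nat.dvd_gcd (Nat.gcd_dvd_left _ _)
        ((Nat.gcd_dvd_right _ _).trans (by first | exact Dvd.intro n rfl | exact Dvd.intro_left m rfl))

theorem stmt_9 (c t : ℤ) (ht : 3 ≤ t) (hto : Odd t) :
    0 ≤ (Int.gcd c 2 : ℚ)^2 + (Int.gcd c (2*t) : ℚ)^2 * (t - 5) / (4*t)
        + (Int.gcd c t : ℚ)^2 / t + (Int.gcd c (4*t) : ℚ)^2 / (4*t)
        - 1 - (Int.gcd c 4 : ℚ)^2 / 4 := by
  have ht0 : (0:ℤ) < t := by omega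
  have hcop2 : Nat.Coprime 2 t.natAbs := by
    rw [Nat.coprime_two_left]
    rcases hto with ⟨k, hk⟩
    exact ⟨k.natAbs, by omega⟩
  have hcop4 : Nat.Coprime 4 t.natAbs := by
    have : (4:ℕ) = 2^2 := rfl
    rw [this]
    exact Nat.Coprime.pow_left _ hcop2
  have h2t : Int.gcd c (2*t) = Int.gcd c 2 * Int.gcd c t := by
    unfold Int.gcd
    rw [Int.natAbs_mul]
    exact mygcd hcop2 c.natAbs
  have h4t : Int.gcd c (4*t) = Int.gcd c 4 * Int.gcd c t := by
    unfold Int.gcd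
    rw [Int.natAbs_mul]
    exact mygcd hcop4 c.natAbs
  -- basic facts
  have hg1 : 1 ≤ Int.gcd c t := Nat.one_le_iff_ne_zero.mpr (by
    simp only [ne_eq, Int.gcd_eq_zero_iff, not_and]
    intro _; omega)
  have gq : (1:ℚ) ≤ (Int.gcd c t : ℚ) := by exact_mod_cast hg1
  have tq : (3:ℚ) ≤ (t:ℚ) := by exact_mod_cast ht
  have tq0 : (0:ℚ) < (t:ℚ) := by linarith
  have tne : (t:ℚ) ≠ 0 := ne_of_gt tq0
  rw [h2t, h4t]
  push_cast
  set G : ℚ := (Int.gcd c t : ℚ) with hG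
  have hG2 : (1:ℚ) ≤ G^2 := by nlinarith
  -- case analysis on gcd c 2 and gcd c 4
  have ha : Int.gcd c 2 = 1 ∨ Int.gcd c 2 = 2 := by
    have h1 : 1 ≤ Int.gcd c 2 := Nat.one_le_iff_ne_zero.mpr (by
      simp only [ne_eq, Int.gcd_eq_zero_iff, not_and]; intro _ h; simp at h)
    have hd : Int.gcd c 2 ∣ 2 := by
      have : ((Int.gcd c 2 : ℤ)) ∣ 2 := Int.gcd_dvd_right c 2
      exact_mod_cast this
    have hle : Int.gcd c 2 ≤ 2 := Nat.le_of_dvd (by norm_num) hd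
    omega
  rcases ha with ha | ha
  · -- c odd, gcd c 4 = 1
    have hb : Int.gcd c 4 = 1 := by
      by_contra hb
      have hdvd : (Int.gcd c 4 : ℤ) ∣ 4 := Int.gcd_dvd_right c 4
      have h2 : (2:ℤ) ∣ (Int.gcd c 4 : ℤ) := by
        have h1 : 1 ≤ Int.gcd c 4 := Nat.one_le_iff_ne_zero.mpr (by
          simp only [ne_eq, Int.gcd_eq_zero_iff, not_and]; intro _ h; simp at h)
        have hd : Int.gcd c 4 ∣ 4 := by
          have : ((Int.gcd c 4 : ℤ)) ∣ 4 := Int.gcd_dvd_right c 4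
          exact_mod_cast this
        have hle : Int.gcd c 4 ≤ 4 := Nat.le_of_dvd (by norm_num) hd
        have : (2:ℕ) ∣ Int.gcd c 4 := by
          interval_cases h : Int.gcd c 4 <;> simp_all <;> omega
        exact_mod_cast this
      have h2c : (2:ℤ) ∣ c := h2.trans (Int.gcd_dvd_left c 4)
      have : (2:ℤ) ∣ (Int.gcd c 2 : ℤ) := Int.dvd_coe_gcd h2c (by norm_num)
      rw [ha] at this; norm_num at this
    rw [ha, hb]
    push_cast
    have key : (1:ℚ)^2 + ((1:ℚ) * G)^2 * ((t:ℚ) - 5) / (4*(t:ℚ)) + G^2/(t:ℚ)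
        + ((1:ℚ)*G)^2/(4*(t:ℚ)) - 1 - (1:ℚ)^2/4 = (G^2 - 1)/4 := by
      field_simp; ring
    rw [key]; linarith
  · -- gcd c 2 = 2, so 2 ∣ c, gcd c 4 ∈ {2, 4}
    have h2c : (2:ℤ) ∣ c := by
      have := Int.gcd_dvd_left (a := c) (b := 2)
      rw [ha] at this; exact_mod_cast this
    have hb2 : (2:ℤ) ∣ (Int.gcd c 4 : ℤ) := Int.dvd_coe_gcd h2c (by norm_num)
    have hbd : (Int.gcd c 4 : ℤ) ∣ 4 := Int.gcd_dvd_right c 4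
    have hb : Int.gcd c 4 = 2 ∨ Int.gcd c 4 = 4 := by
      have hd : Int.gcd c 4 ∣ 4 := by
        have : ((Int.gcd c 4 : ℤ)) ∣ 4 := Int.gcd_dvd_right c 4
        exact_mod_cast this
      have hb2' : (2:ℕ) ∣ Int.gcd c 4 := by exact_mod_cast hb2
      have h1 : 1 ≤ Int.gcd c 4 := Nat.one_le_iff_ne_zero.mpr (by
        simp only [ne_eq, Int.gcd_eq_zero_iff, not_and]; intro _ h; simp at h)
      have hle : Int.gcd c 4 ≤ 4 := Nat.le_of_dvd (by norm_num) hd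
      interval_cases h : Int.gcd c 4 <;> omega
    rw [ha]
    rcases hb with hb | hb <;> rw [hb] <;> push_cast
    · have key : (2:ℚ)^2 + ((2:ℚ) * G)^2 * ((t:ℚ) - 5) / (4*(t:ℚ)) + G^2/(t:ℚ)
          + ((2:ℚ)*G)^2/(4*(t:ℚ)) - 1 - (2:ℚ)^2/4 = 2 + G^2 * ((t:ℚ) - 3)/(t:ℚ) := by
        field_simp; ring
      rw [key]
      have : 0 ≤ G^2 * ((t:ℚ) - 3)/(t:ℚ) :=
        div_nonneg (mul_nonneg (sq_nonneg _) (by linarith)) (le_of_lt tq0)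
      linarith
    · have key : (2:ℚ)^2 + ((2:ℚ) * G)^2 * ((t:ℚ) - 5) / (4*(t:ℚ)) + G^2/(t:ℚ)
          + ((4:ℚ)*G)^2/(4*(t:ℚ)) - 1 - (4:ℚ)^2/4 = G^2 - 1 := by
        field_simp; ring
      rw [key]; linarith
end

section
/- For all odd integers t ≥ 3 and all positive integers k such that gcd(t, k) ≠ 1 or k ≡ 2 (mod 4): 1 + gcd(4,k)²/4 − gcd(t,k)²/t − gcd(4t,k)²/(4t) − gcd(2,k)² − gcd(2t,k)²·(t−5)/(4t) < −1. Moreover, if gcd(t,k) = 1 and k ≢ 2 (mod 4), the left-hand side equals 0. -/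
lemma gcd_mul_of_cop {m n : ℕ} (h : Nat.Coprime m n) (k : ℕ) :
    Nat.gcd (m * n) k = Nat.gcd m k * Nat.gcd n k := by
  apply Nat.dvd_antisymm
  · have hd : Nat.gcd (m * n) k ∣ m * n := Nat.gcd_dvd_left _ _
    have h2 := (Nat.dvd_gcd_mul_gcd_iff_dvd_mul (k := Nat.gcd (m * n) k) (n := m) (m := n)).mpr hd
    exact h2.trans (Nat.mul_dvd_mul
      (Nat.dvd_gcd (Nat.gcd_dvd_right _ _) ((Nat.gcd_dvd_left _ _).trans (Nat.gcd_dvd_right _ _)))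
      (Nat.dvd_gcd (Nat.gcd_dvd_right _ _) ((Nat.gcd_dvd_left _ _).trans (Nat.gcd_dvd_right _ _))))
  · exact Nat.dvd_gcd (Nat.mul_dvd_mul (Nat.gcd_dvd_left _ _) (Nat.gcd_dvd_left _ _))
      (Nat.Coprime.mul_dvd_of_dvd_of_dvd
        ((h.coprime_dvd_left (Nat.gcd_dvd_left m k)).coprime_dvd_right (Nat.gcd_dvd_left n k))
        (Nat.gcd_dvd_right _ _) (Nat.gcd_dvd_right _ _))

theorem stmt_11 (t k : ℤ) (ht : 3 ≤ t) (hto : Odd t) (hk : 0 < k) :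
    ((Int.gcd t k ≠ 1 ∨ k % 4 = 2) →
      (1 + (Int.gcd 4 k : ℚ)^2 / 4 - (Int.gcd t k : ℚ)^2 / t
        - (Int.gcd (4*t) k : ℚ)^2 / (4*t) - (Int.gcd 2 k : ℚ)^2
        - (Int.gcd (2*t) k : ℚ)^2 * (t - 5) / (4*t)) < -1) ∧
    ((Int.gcd t k = 1 ∧ k % 4 ≠ 2) →
      (1 + (Int.gcd 4 k : ℚ)^2 / 4 - (Int.gcd t k : ℚ)^2 / t
        - (Int.gcd (4*t) k : ℚ)^2 / (4*t) - (Int.gcd 2 k : ℚ)^2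
        - (Int.gcd (2*t) k : ℚ)^2 * (t - 5) / (4*t)) = 0) := by
  have ht0 : (0:ℚ) < (t:ℚ) := by exact_mod_cast (by omega : (0:ℤ) < t)
  have htQ : (3:ℚ) ≤ (t:ℚ) := by exact_mod_cast ht
  set g : ℕ := Int.gcd t k with hg
  have htn : Odd t.natAbs := Int.natAbs_odd.mpr hto
  have hcop2 : Nat.Coprime 2 t.natAbs := htn.coprime_two_left
  have hcop4 : Nat.Coprime 4 t.natAbs := by
    have h2 := Nat.Coprime.pow_left 2 hcop2
    norm_num at h2
    exact h2
  have h2t : Int.gcd (2*t) k = Int.gcd 2 k * g := by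
    show Nat.gcd (2*t).natAbs k.natAbs = Nat.gcd (2:ℤ).natAbs k.natAbs * g
    rw [Int.natAbs_mul, (by rfl : (2:ℤ).natAbs = 2), gcd_mul_of_cop hcop2]
    rfl
  have h4t : Int.gcd (4*t) k = Int.gcd 4 k * g := by
    show Nat.gcd (4*t).natAbs k.natAbs = Nat.gcd (4:ℤ).natAbs k.natAbs * g
    rw [Int.natAbs_mul, (by rfl : (4:ℤ).natAbs = 4), gcd_mul_of_cop hcop4]
    rfl
  have hgdvd : (g:ℤ) ∣ t := Int.gcd_dvd_left _ _
  have hg1 : 1 ≤ g := by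
    rcases Nat.eq_zero_or_pos g with h | h
    · exfalso; rw [hg, Int.gcd_eq_zero_iff] at h; omega
    · exact h
  have hgodd : ¬ 2 ∣ g := by
    intro h2
    have : (2:ℤ) ∣ t := dvd_trans (by exact_mod_cast h2) hgdvd
    rw [Int.odd_iff] at hto
    omega
  -- compute gcd 2 k
  have hd2e : k % 2 = 0 → Int.gcd 2 k = 2 := fun h => by
    rw [Int.gcd_eq_natAbs_left (by omega : (2:ℤ) ∣ k)]; rfl
  have hd2o : k % 2 = 1 → Int.gcd 2 k = 1 := fun h => by
    have hko : Odd k.natAbs := Int.natAbs_odd.mpr (Int.odd_iff.mpr h)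
    show Nat.gcd (2:ℤ).natAbs k.natAbs = 1
    exact hko.coprime_two_left
  -- compute gcd 4 k
  have hd40 : k % 4 = 0 → Int.gcd 4 k = 4 := fun h => by
    rw [Int.gcd_eq_natAbs_left (by omega : (4:ℤ) ∣ k)]; rfl
  have hd4o : k % 2 = 1 → Int.gcd 4 k = 1 := fun h => by
    have hko : Odd k.natAbs := Int.natAbs_odd.mpr (Int.odd_iff.mpr h)
    have h2 := Nat.Coprime.pow_left 2 hko.coprime_two_left
    norm_num at h2
    show Nat.gcd (4:ℤ).natAbs k.natAbs = 1
    exact h2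
  have hd42 : k % 4 = 2 → Int.gcd 4 k = 2 := fun h => by
    set d := Int.gcd 4 k with hd
    have h1 : ((d:ℕ) : ℤ) ∣ 4 := Int.gcd_dvd_left _ _
    have h2 : ((d:ℕ) : ℤ) ∣ k := Int.gcd_dvd_right _ _
    have h3 : d ∣ 4 := by exact_mod_cast h1
    have h5 : (2:ℤ) ∣ ((d:ℕ) : ℤ) := Int.dvd_coe_gcd (by norm_num) (by omega)
    have h6 : 2 ∣ d := by exact_mod_cast h5
    have hne0 : d ≠ 0 := by intro h0; rw [h0] at h3; simp at h3
    have hle := Nat.le_of_dvd (by norm_num) h3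
    have hcase : d = 2 ∨ d = 4 := by omega
    rcases hcase with h' | h'
    · exact h'
    · exfalso; rw [h'] at h2; norm_num at h2; omega
  constructor
  · rintro (hne | hmod)
    · rcases (by omega : k % 4 = 0 ∨ k % 4 = 1 ∨ k % 4 = 2 ∨ k % 4 = 3) with h | h | h | h
      · have hgQ : (3:ℚ) ≤ (g:ℚ) := by exact_mod_cast (by omega : 3 ≤ g)
        rw [h2t, h4t, hd2e (by omega), hd40 h]
        have hg2 : (9:ℚ) ≤ (g:ℚ)^2 := by nlinarith
        push_cast
        field_simp
        nlinarith [mul_le_mul_of_nonneg_right hg2 ht0.le]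
      · have hgQ : (3:ℚ) ≤ (g:ℚ) := by exact_mod_cast (by omega : 3 ≤ g)
        rw [h2t, h4t, hd2o (by omega), hd4o (by omega)]
        have hg2 : (9:ℚ) ≤ (g:ℚ)^2 := by nlinarith
        push_cast
        field_simp
        nlinarith [mul_le_mul_of_nonneg_right hg2 ht0.le]
      · have hgQ : (1:ℚ) ≤ (g:ℚ) := by exact_mod_cast hg1
        rw [h2t, h4t, hd2e (by omega), hd42 h]
        push_cast
        field_simp
        nlinarith [mul_le_mul_of_nonneg_left htQ (sq_nonneg ((g:ℚ)))]
      · have hgQ : (3:ℚ) ≤ (g:ℚ) := by exact_mod_cast (by omega : 3 ≤ g)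
        rw [h2t, h4t, hd2o (by omega), hd4o (by omega)]
        have hg2 : (9:ℚ) ≤ (g:ℚ)^2 := by nlinarith
        push_cast
        field_simp
        nlinarith [mul_le_mul_of_nonneg_right hg2 ht0.le]
    · have hgQ : (1:ℚ) ≤ (g:ℚ) := by exact_mod_cast hg1
      rw [h2t, h4t, hd2e (by omega), hd42 hmod]
      push_cast
      field_simp
      nlinarith [mul_le_mul_of_nonneg_left htQ (sq_nonneg ((g:ℚ)))]
  · rintro ⟨hgeq, hmod⟩
    rcases (by omega : k % 4 = 0 ∨ k % 4 = 1 ∨ k % 4 = 3) with h | h | h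
    · rw [h2t, h4t, hd2e (by omega), hd40 h, hgeq]
      push_cast
      field_simp
      ring
    · rw [h2t, h4t, hd2o (by omega), hd4o (by omega), hgeq]
      push_cast
      field_simp
      ring
    · rw [h2t, h4t, hd2o (by omega), hd4o (by omega), hgeq]
      push_cast
      field_simp
      ring
end
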